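/- Let S ⊂ Φ be a set of pairwise strongly orthogonal roots in a finite root system and let γ ∈ Φ be such that Σ_{α∈S}⟨γ, α^∨⟩ is maximal among all roots. Let S_0 = {α ∈ S : ⟨γ, α^∨⟩ > 0}. Then Σ_{α∈S}⟨γ, α^∨⟩ ≤ Σ_{α∈S_0}⟨γ, α^∨⟩, and the set S_0 ∪ {−γ} has the property that the matrix (⟨α, β^∨⟩)_{α,β ∈ S_0∪{−γ}} is a generalized Cartan matrix (diagonal entries 2, off-diagonal entries nonpositive integers, with ⟨α,β^∨⟩ = 0 iff ⟨β,α^∨⟩ = 0). -/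

import Mathlib

open scoped Classical RealInnerProductSpace

/-- The pairing `⟨γ, α^∨⟩ = 2(γ,α)/(α,α)`. -/
noncomputable def pairing {V : Type*} [NormedAddCommGroup V] [InnerProductSpace ℝ V]
    (γ α : V) : ℝ :=
  2 * ⟪γ, α⟫ / ⟪α, α⟫

/-- A finite (crystallographic, reduced) root system in a Euclidean space. -/
structure IsRootSystem {V : Type*} [NormedAddCommGroup V] [InnerProductSpace ℝ V]
    (Φ : Set V) : Prop where
  finite : Φ.Finite
  ne_zero : ∀ α ∈ Φ, α ≠ 0
  neg_mem : ∀ α ∈ Φ, -α ∈ Φ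
  reflect_mem : ∀ α ∈ Φ, ∀ β ∈ Φ, β - pairing β α • α ∈ Φ
  crystal : ∀ α ∈ Φ, ∀ β ∈ Φ, ∃ n : ℤ, pairing β α = n
  reduced : ∀ α ∈ Φ, ∀ t : ℝ, t • α ∈ Φ → t = 1 ∨ t = -1

/-- Irreducibility of a root system: no nontrivial orthogonal decomposition. -/
def IsIrreducibleRS {V : Type*} [NormedAddCommGroup V] [InnerProductSpace ℝ V]
    (Φ : Set V) : Prop :=
  ∀ Φ₁ Φ₂ : Set V, Φ = Φ₁ ∪ Φ₂ → (∀ α ∈ Φ₁, ∀ β ∈ Φ₂, ⟪α, β⟫ = 0) → Φ₁ = ∅ ∨ Φ₂ = ∅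

/-- A set of roots is strongly orthogonal if for any two distinct elements neither the sum
nor the difference is a root. -/
def StronglyOrthogonal {V : Type*} [NormedAddCommGroup V] [InnerProductSpace ℝ V]
    (Φ : Set V) (S : Set V) : Prop :=
  ∀ α ∈ S, ∀ β ∈ S, α ≠ β → α + β ∉ Φ ∧ α - β ∉ Φ

/-- A set of pairwise orthogonal vectors. -/
def OrthogonalSet {V : Type*} [NormedAddCommGroup V] [InnerProductSpace ℝ V]
    (S : Set V) : Prop :=
  ∀ α ∈ S, ∀ β ∈ S, α ≠ β → ⟪α, β⟫ = 0

section MyAux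
variable {V : Type*} [NormedAddCommGroup V] [InnerProductSpace ℝ V]
variable {V : Type*} [NormedAddCommGroup V] [InnerProductSpace ℝ V]

lemma inner_self_pos' {a : V} (ha : a ≠ 0) : (0:ℝ) < ⟪a, a⟫ :=
  lt_of_le_of_ne real_inner_self_nonneg (Ne.symm (inner_self_ne_zero.mpr ha))

lemma pairing_pos_iff {a b : V} (hb : b ≠ 0) : 0 < pairing a b ↔ 0 < ⟪a, b⟫ := by
  have h := inner_self_pos' hb
  unfold pairing
  rw [div_pos_iff]
  constructor
  · rintro (⟨h1, _⟩ | ⟨_, h2⟩) <;> linarith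
  · intro h1; left; constructor <;> linarith

lemma pairing_eq_zero_iff {a b : V} (hb : b ≠ 0) : pairing a b = 0 ↔ ⟪a, b⟫ = 0 := by
  have h := inner_self_pos' hb
  unfold pairing
  rw [div_eq_zero_iff]
  constructor
  · rintro (h1 | h2) <;> [linarith; linarith [h2 ▸ h]]
  · intro h1; rw [h1, mul_zero]; left; rfl

lemma pairing_neg_left {a b : V} : pairing (-a) b = - pairing a b := by
  unfold pairing; rw [inner_neg_left]; ring

lemma pairing_neg_right {a b : V} : pairing a (-b) = - pairing a b := by
  unfold pairing; rw [inner_neg_right, inner_neg_neg]; ring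

lemma pairing_self {a : V} (ha : a ≠ 0) : pairing a a = 2 := by
  unfold pairing
  rw [mul_div_assoc, div_self (inner_self_ne_zero.mpr ha), mul_one]

lemma sub_mem_of_inner_pos {Φ : Set V} (hΦ : IsRootSystem Φ)
    {α β : V} (hα : α ∈ Φ) (hβ : β ∈ Φ) (hpos : 0 < ⟪α, β⟫) (hne : α ≠ β) :
    α - β ∈ Φ := by
  have hα0 : α ≠ 0 := hΦ.ne_zero _ hα
  have hβ0 : β ≠ 0 := hΦ.ne_zero _ hβ
  have haa := inner_self_pos' hα0
  have hbb := inner_self_pos' hβ0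
  obtain ⟨m, hm⟩ := hΦ.crystal β hβ α hα
  obtain ⟨n, hn⟩ := hΦ.crystal α hα β hβ
  have hmpos : 0 < pairing α β := (pairing_pos_iff hβ0).mpr hpos
  have hnpos : 0 < pairing β α := (pairing_pos_iff hα0).mpr (by rwa [real_inner_comm])
  have hm1 : 1 ≤ m := by
    have : (0:ℝ) < (m:ℝ) := hm ▸ hmpos
    exact_mod_cast this
  have hn1 : 1 ≤ n := by
    have : (0:ℝ) < (n:ℝ) := hn ▸ hnpos
    exact_mod_cast this
  by_cases hm2 : m = 1
  · have := hΦ.reflect_mem β hβ α hα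
    rwa [hm, hm2, Int.cast_one, one_smul] at this
  by_cases hn2 : n = 1
  · have h := hΦ.reflect_mem α hα β hβ
    rw [hn, hn2, Int.cast_one, one_smul] at h
    have h2 := hΦ.neg_mem _ h
    rwa [neg_sub] at h2
  exfalso
  have hm2' : (2:ℝ) ≤ pairing α β := by
    rw [hm]; exact_mod_cast lt_of_le_of_ne hm1 (Ne.symm hm2)
  have hn2' : (2:ℝ) ≤ pairing β α := by
    rw [hn]; exact_mod_cast lt_of_le_of_ne hn1 (Ne.symm hn2)
  unfold pairing at hm2' hn2'
  rw [le_div_iff₀ hbb] at hm2'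
  rw [le_div_iff₀ haa] at hn2'
  rw [real_inner_comm α β] at hn2'
  have hab : α - β ≠ 0 := sub_ne_zero.mpr hne
  have hpos2 := inner_self_pos' hab
  have : ⟪α - β, α - β⟫ = ⟪α,α⟫ - 2*⟪α,β⟫ + ⟪β,β⟫ := by
    simp only [inner_sub_left, inner_sub_right, real_inner_comm β α]
    ring
  rw [this] at hpos2
  linarith

lemma so_inner_zero {Φ : Set V} (hΦ : IsRootSystem Φ) {a b : V}
    (ha : a ∈ Φ) (hb : b ∈ Φ) (hne : a ≠ b) (hne' : a ≠ -b)
    (hsum : a + b ∉ Φ) (hdiff : a - b ∉ Φ) : ⟪a, b⟫ = 0 := by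
  by_contra h
  rcases lt_or_gt_of_ne h with hlt | hgt
  · have : a - -b ∈ Φ := sub_mem_of_inner_pos hΦ ha (hΦ.neg_mem _ hb)
      (by rw [inner_neg_right]; linarith) hne'
    rw [sub_neg_eq_add] at this
    exact hsum this
  · exact hdiff (sub_mem_of_inner_pos hΦ ha hb hgt hne)
end MyAux


/-- if `S` is strongly orthogonal and `γ ∈ Φ` maximizes `∑_{α ∈ S} ⟨γ, α^∨⟩`,
and `S₀ = {α ∈ S : ⟨γ, α^∨⟩ > 0}`, then the sum over `S` is at most the sum over `S₀`, and
the matrix `(⟨a, b^∨⟩)` on `S₀ ∪ {-γ}` is a generalized Cartan matrix. -/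
theorem stmt17 {V : Type*} [NormedAddCommGroup V] [InnerProductSpace ℝ V]
    (Φ : Set V) (hΦ : IsRootSystem Φ) (S : Finset V) (hSΦ : ↑S ⊆ Φ)
    (hso : StronglyOrthogonal Φ ↑S) (γ : V) (hγ : γ ∈ Φ)
    (hmax : ∀ η ∈ Φ, ∑ α ∈ S, pairing η α ≤ ∑ α ∈ S, pairing γ α) :
    (∑ α ∈ S, pairing γ α ≤ ∑ α ∈ S.filter (fun α => 0 < pairing γ α), pairing γ α) ∧
    (∀ a ∈ insert (-γ) (S.filter (fun α => 0 < pairing γ α)), pairing a a = 2) ∧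
    (∀ a ∈ insert (-γ) (S.filter (fun α => 0 < pairing γ α)),
      ∀ b ∈ insert (-γ) (S.filter (fun α => 0 < pairing γ α)), a ≠ b →
        pairing a b ≤ 0 ∧ (∃ n : ℤ, pairing a b = n) ∧ (pairing a b = 0 ↔ pairing b a = 0)) := by

  classical
  set S₀ := S.filter (fun α => 0 < pairing γ α) with hS₀
  have hγ0 : γ ≠ 0 := hΦ.ne_zero _ hγ
  have hnγ : -γ ∈ Φ := hΦ.neg_mem _ hγ
  have hmemΦ : ∀ a ∈ insert (-γ) S₀, a ∈ Φ := by
    intro a ha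
    rcases Finset.mem_insert.mp ha with h | h
    · exact h ▸ hnγ
    · exact hSΦ (Finset.mem_filter.mp h).1
  refine ⟨?_, ?_, ?_⟩
  · rw [← Finset.sum_filter_add_sum_filter_not S (fun α => 0 < pairing γ α) (pairing γ)]
    have : ∑ α ∈ S.filter (fun α => ¬ 0 < pairing γ α), pairing γ α ≤ 0 := by
      apply Finset.sum_nonpos
      intro a ha
      exact le_of_not_gt (Finset.mem_filter.mp ha).2
    linarith
  · intro a ha
    exact pairing_self (hΦ.ne_zero _ (hmemΦ a ha))
  · intro a ha b hb hne
    have haΦ := hmemΦ a ha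
    have hbΦ := hmemΦ b hb
    have ha0 := hΦ.ne_zero _ haΦ
    have hb0 := hΦ.ne_zero _ hbΦ
    refine ⟨?_, hΦ.crystal b hbΦ a haΦ, ?_⟩
    · -- nonpositivity
      have key : ⟪a, b⟫ ≤ 0 := by
        rcases Finset.mem_insert.mp ha with ha' | ha' <;>
          rcases Finset.mem_insert.mp hb with hb' | hb'
        · exact absurd (ha'.trans hb'.symm) hne
        · -- a = -γ, b ∈ S₀
          obtain ⟨hbS, hbpos⟩ := Finset.mem_filter.mp hb'
          have : 0 < ⟪γ, b⟫ := (pairing_pos_iff hb0).mp hbpos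
          rw [ha', inner_neg_left]
          linarith
        · -- a ∈ S₀, b = -γ
          obtain ⟨haS, hapos⟩ := Finset.mem_filter.mp ha'
          have : 0 < ⟪γ, a⟫ := (pairing_pos_iff ha0).mp hapos
          rw [hb', inner_neg_right, real_inner_comm]
          linarith
        · -- both in S₀
          obtain ⟨haS, hapos⟩ := Finset.mem_filter.mp ha'
          obtain ⟨hbS, hbpos⟩ := Finset.mem_filter.mp hb'
          have hne' : a ≠ -b := by
            intro h
            have h1 : 0 < ⟪γ, a⟫ := (pairing_pos_iff ha0).mp hapos
            have h2 : 0 < ⟪γ, b⟫ := (pairing_pos_iff hb0).mp hbpos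
            rw [h, inner_neg_right] at h1
            linarith
          obtain ⟨h1, h2⟩ := hso a haS b hbS hne
          exact le_of_eq (so_inner_zero hΦ haΦ hbΦ hne hne' h1 h2)
      have hbb := inner_self_pos' hb0
      unfold pairing
      apply div_nonpos_of_nonpos_of_nonneg <;> linarith
    · rw [pairing_eq_zero_iff hb0, pairing_eq_zero_iff ha0, real_inner_comm]
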